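/- Let f, g ∈ ℚ⟦t⟧ be formal power series with zero constant term such that g(f(t)) = t and f(g(t)) = t (g is the compositional inverse of f). Write f_j := j!·(coefficient of t^j in f) and g_j := j!·(coefficient of t^j in g), and for 1 ≤ k ≤ n define F_{n,k} = ∑_{J} ∏_{B ∈ J} f_{|B|} and G_{n,k} = ∑_{J} ∏_{B ∈ J} g_{|B|}, where each sum is over all partitions J of {1,…,n} into exactly k blocks. Then for all 1 ≤ k ≤ n, ∑_{m=k}^{n} F_{n,m} · G_{m,k} equals 1 if n = k and 0 otherwise. -/

import Mathlib

open Finset Nat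

/-- Composition `g ∘ f` of formal power series: for `f` with zero constant term, the
coefficient of `t^n` in `g(f(t))` is `∑_{m ≤ n} (coeff m g) · (coeff n (f^m))`. -/
noncomputable def PowerSeries.comp (g f : PowerSeries ℚ) : PowerSeries ℚ :=
  PowerSeries.mk fun n =>
    ∑ m ∈ Finset.range (n + 1), PowerSeries.coeff m g * PowerSeries.coeff n (f ^ m)

section Aux

open PowerSeries

lemma coeff_pow_eq_zero {f : PowerSeries ℚ} (hf : PowerSeries.constantCoeff f = 0)
    {n m : ℕ} (h : n < m) : PowerSeries.coeff n (f ^ m) = 0 := by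
  have hd : (PowerSeries.X : ℚ⟦X⟧) ^ m ∣ f ^ m :=
    pow_dvd_pow_of_dvd (PowerSeries.X_dvd_iff.mpr hf) m
  exact PowerSeries.X_pow_dvd_iff.mp hd n h

lemma coeff_eval₂ {f : PowerSeries ℚ} (hf : PowerSeries.constantCoeff f = 0)
    (p : Polynomial ℚ) (n : ℕ) :
    PowerSeries.coeff n (Polynomial.eval₂ (PowerSeries.C) f p) =
      ∑ m ∈ Finset.range (n + 1), p.coeff m * PowerSeries.coeff n (f ^ m) := by
  set N := max (n + 1) (p.natDegree + 1) with hN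
  have hdeg : p.natDegree < N := lt_of_lt_of_le (Nat.lt_succ_self _) (le_max_right _ _)
  rw [Polynomial.eval₂_eq_sum_range' _ hdeg, map_sum]
  have h1 : ∀ m ∈ Finset.range N, PowerSeries.coeff n (PowerSeries.C (p.coeff m) * f ^ m)
      = p.coeff m * PowerSeries.coeff n (f ^ m) := by
    intro m _; rw [PowerSeries.coeff_C_mul]
  rw [Finset.sum_congr rfl h1]
  symm
  apply Finset.sum_subset (Finset.range_subset_range.mpr (le_max_left _ _))
  intro m _ hm
  have : n < m := by simp only [Finset.mem_range, not_lt] at hm; omega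
  rw [coeff_pow_eq_zero hf this, mul_zero]

lemma coeff_comp (b f : PowerSeries ℚ) (n : ℕ) :
    PowerSeries.coeff n (b.comp f) =
      ∑ m ∈ Finset.range (n + 1), PowerSeries.coeff m b * PowerSeries.coeff n (f ^ m) := by
  simp [PowerSeries.comp, PowerSeries.coeff_mk]

lemma coeff_comp_eq_eval₂ {f : PowerSeries ℚ} (hf : PowerSeries.constantCoeff f = 0)
    (b : PowerSeries ℚ) {n N : ℕ} (hn : n < N) :
    PowerSeries.coeff n (b.comp f) =
      PowerSeries.coeff n (Polynomial.eval₂ (PowerSeries.C) f (PowerSeries.trunc N b)) := by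
  rw [coeff_comp, coeff_eval₂ hf]
  apply Finset.sum_congr rfl
  intro m hm
  rw [PowerSeries.coeff_trunc, if_pos (lt_of_lt_of_le (Finset.mem_range.mp hm) hn)]

lemma comp_mul {f : PowerSeries ℚ} (hf : PowerSeries.constantCoeff f = 0)
    (a b : PowerSeries ℚ) : (a * b).comp f = a.comp f * b.comp f := by
  ext n
  rw [coeff_comp, PowerSeries.coeff_mul]
  have key : ∀ m ∈ Finset.range (n + 1),
      PowerSeries.coeff m (a * b) * PowerSeries.coeff n (f ^ m) =
      ((PowerSeries.trunc (n+1) a) * (PowerSeries.trunc (n+1) b)).coeff m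
        * PowerSeries.coeff n (f ^ m) := by
    intro m hm
    rw [PowerSeries.coeff_mul_eq_coeff_trunc_mul_trunc a b (Finset.mem_range.mp hm),
        ← Polynomial.coe_mul, Polynomial.coeff_coe]
  rw [Finset.sum_congr rfl key, ← coeff_eval₂ hf, Polynomial.eval₂_mul, PowerSeries.coeff_mul]
  apply Finset.sum_congr rfl
  intro p hp
  rw [Finset.HasAntidiagonal.mem_antidiagonal] at hp
  rw [coeff_comp_eq_eval₂ hf a (show p.1 < n+1 by omega),
      coeff_comp_eq_eval₂ hf b (show p.2 < n+1 by omega)]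

lemma comp_one (f : PowerSeries ℚ) : PowerSeries.comp 1 f = 1 := by
  ext n
  rw [coeff_comp]
  rw [Finset.sum_eq_single 0]
  · simp
  · intro m _ hm
    rw [PowerSeries.coeff_one, if_neg hm, zero_mul]
  · intro h; simp at h


noncomputable def phi (f : PowerSeries ℚ) (j : ℕ) : ℚ := (j ! : ℚ) * PowerSeries.coeff j f

lemma phi_eq (f : PowerSeries ℚ) (j : ℕ) :
    (j ! : ℚ) * PowerSeries.coeff j f = phi f j := rfl

variable {α : Type} [DecidableEq α]

lemma finpartition_ext {s : Finset α} (P Q : Finpartition s) (h : P.parts = Q.parts) : P = Q := by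
  cases P; cases Q; simpa using h

lemma avoid_parts_of_mem {s : Finset α} (P : Finpartition s) {b : Finset α}
    (hb : b ∈ P.parts) : (P.avoid b).parts = P.parts.erase b := by
  ext c
  rw [Finpartition.mem_avoid, Finset.mem_erase]
  constructor
  · rintro ⟨d, hd, hdb, rfl⟩
    have hne : d ≠ b := fun h => hdb (h ▸ le_rfl)
    have hdisj : Disjoint d b := P.disjoint hd hb hne
    rw [hdisj.sdiff_eq_left]
    exact ⟨hne, hd⟩
  · rintro ⟨hcb, hc⟩
    have hdisj : Disjoint c b := P.disjoint hc hb hcb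
    refine ⟨c, hc, fun hle => ?_, hdisj.sdiff_eq_left⟩
    exact P.ne_bot hc (disjoint_self.mp (Disjoint.mono_left hle hdisj.symm))

lemma not_mem_parts_sdiff {s B : Finset α} (Q : Finpartition (s \ B)) (hB : B.Nonempty) :
    B ∉ Q.parts := fun h =>
  hB.ne_empty (by
    have hle := Q.le h
    have : Disjoint B B := Disjoint.mono_left hle sdiff_disjoint
    simpa [Finset.bot_eq_empty] using disjoint_self.mp this)

lemma sigma_finpartition_eq {s : Finset α} {B₁ B₂ : Finset α} {Q₁ : Finpartition (s \ B₁)}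
    {Q₂ : Finpartition (s \ B₂)} (h : B₁ = B₂) (h2 : Q₁.parts = Q₂.parts) :
    (⟨B₁, Q₁⟩ : Σ B : Finset α, Finpartition (s \ B)) = ⟨B₂, Q₂⟩ := by
  subst h; rw [finpartition_ext Q₁ Q₂ h2]

lemma extend_round_trip {s B : Finset α} {a : α} (ha : a ∈ s) (haB : a ∈ B)
    (Q : Finpartition (s \ B)) (hb : B ≠ ⊥) (hab : Disjoint (s \ B) B)
    (hc : s \ B ⊔ B = s) :
    (⟨(Q.extend hb hab hc).part a,
        (Q.extend hb hab hc).avoid ((Q.extend hb hab hc).part a)⟩ :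
      Σ C : Finset α, Finpartition (s \ C)) = ⟨B, Q⟩ := by
  set E := Q.extend hb hab hc with hE
  have hmem : B ∈ E.parts := by
    rw [hE, Finpartition.extend_parts]; exact Finset.mem_insert_self _ _
  have hpa : E.part a = B := E.part_eq_of_mem hmem haB
  refine sigma_finpartition_eq hpa ?_
  rw [avoid_parts_of_mem E (E.part_mem.2 ha), hpa, hE, Finpartition.extend_parts,
    Finset.erase_insert (not_mem_parts_sdiff Q ⟨a, haB⟩)]

lemma partition_decomp {s : Finset α} {a : α} (ha : a ∈ s) (f : PowerSeries ℚ) (k' : ℕ) :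
    ∑ P ∈ Finset.univ.filter (fun P : Finpartition s => P.parts.card = k' + 1),
        ∏ B ∈ P.parts, phi f B.card
      = ∑ B ∈ s.powerset.filter (fun B => a ∈ B),
          phi f B.card *
            ∑ Q ∈ Finset.univ.filter (fun Q : Finpartition (s \ B) => Q.parts.card = k'),
              ∏ C ∈ Q.parts, phi f C.card := by
  simp_rw [Finset.mul_sum]
  rw [Finset.sum_sigma' (s.powerset.filter (fun B => a ∈ B))
    (fun B => Finset.univ.filter (fun Q : Finpartition (s \ B) => Q.parts.card = k'))
    (fun B Q => phi f B.card * ∏ C ∈ Q.parts, phi f C.card)]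
  refine Finset.sum_bij'
    (fun P _ => (⟨P.part a, P.avoid (P.part a)⟩ : Σ B : Finset α, Finpartition (s \ B)))
    (fun x hx => x.2.extend
      (by
        have h1 := (Finset.mem_filter.mp (Finset.mem_sigma.mp hx).1).2
        simp only [Finset.bot_eq_empty]
        exact Finset.ne_empty_of_mem h1)
      sdiff_disjoint
      (by
        have h1 := Finset.mem_powerset.mp
          (Finset.mem_filter.mp (Finset.mem_sigma.mp hx).1).1
        rw [sup_eq_union]
        exact Finset.sdiff_union_of_subset h1))
    ?_ ?_ ?_ ?_ ?_
  · intro P hP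
    have hPc := (Finset.mem_filter.mp hP).2
    rw [Finset.mem_sigma]
    constructor
    · rw [Finset.mem_filter, Finset.mem_powerset]
      exact ⟨P.le (P.part_mem.2 ha), P.mem_part ha⟩
    · refine Finset.mem_filter.mpr ⟨Finset.mem_univ _, ?_⟩
      rw [avoid_parts_of_mem P (P.part_mem.2 ha), Finset.card_erase_of_mem (P.part_mem.2 ha), hPc]
      omega
  · intro x hx
    have h2 := (Finset.mem_filter.mp (Finset.mem_sigma.mp hx).2).2
    refine Finset.mem_filter.mpr ⟨Finset.mem_univ _, ?_⟩
    rw [Finpartition.card_extend, h2]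
  · intro P hP
    apply finpartition_ext
    rw [Finpartition.extend_parts, avoid_parts_of_mem P (P.part_mem.2 ha),
      Finset.insert_erase (P.part_mem.2 ha)]
  · rintro ⟨B, Q⟩ hx
    have ha1 : a ∈ B := (Finset.mem_filter.mp (Finset.mem_sigma.mp hx).1).2
    exact extend_round_trip ha ha1 Q _ _ _
  · intro P hP
    rw [avoid_parts_of_mem P (P.part_mem.2 ha)]
    exact (Finset.mul_prod_erase _ _ (P.part_mem.2 ha)).symm

lemma bell_sum (f : PowerSeries ℚ) (hf : PowerSeries.constantCoeff f = 0) :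
    ∀ (n : ℕ) {α : Type} [DecidableEq α] (s : Finset α), s.card = n → ∀ (k : ℕ),
      (k ! : ℚ) * ∑ P ∈ Finset.univ.filter (fun P : Finpartition s => P.parts.card = k),
          ∏ B ∈ P.parts, phi f B.card
        = (n ! : ℚ) * PowerSeries.coeff n (f ^ k) := by
  intro n
  induction n using Nat.strong_induction_on with
  | _ n IH =>
    intro α _ s hs k
    rcases s.eq_empty_or_nonempty with rfl | ⟨a, ha⟩
    · simp only [Finset.card_empty] at hs
      subst hs
      have hparts : ∀ P : Finpartition (∅ : Finset α), P.parts = ∅ := fun P =>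
        Finpartition.parts_eq_empty_iff.mpr rfl
      cases k with
      | zero =>
        rw [Finset.filter_true_of_mem (fun P _ => by rw [hparts P]; rfl)]
        have hsum : ∑ P ∈ (Finset.univ : Finset (Finpartition (∅ : Finset α))),
            ∏ B ∈ P.parts, phi f B.card = ∑ P ∈ (Finset.univ : Finset (Finpartition (∅ : Finset α))), 1 := by
          apply Finset.sum_congr rfl
          intro P _
          rw [hparts P, Finset.prod_empty]
        rw [hsum, Finset.sum_const, Finset.card_univ]
        have hcard : Fintype.card (Finpartition (∅ : Finset α)) = 1 := by
          rw [Fintype.card_eq_one_iff]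
          exact ⟨⊥, fun P => finpartition_ext P ⊥ (by rw [hparts P, hparts ⊥])⟩
        rw [hcard]
        simp
      | succ k' =>
        rw [Finset.filter_false_of_mem (fun P _ => by rw [hparts P]; simp)]
        rw [Finset.sum_empty, mul_zero]
        rw [PowerSeries.coeff_zero_eq_constantCoeff, map_pow, hf, zero_pow (Nat.succ_ne_zero k')]
        ring
    · have hn0 : n ≠ 0 := by
        rw [← hs]
        exact Finset.card_ne_zero_of_mem ha
      cases k with
      | zero =>
        rw [Finset.filter_false_of_mem (fun P _ h => by
          rw [Finset.card_eq_zero, Finpartition.parts_eq_empty_iff, Finset.bot_eq_empty] at h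
          exact Finset.ne_empty_of_mem ha h)]
        rw [Finset.sum_empty, mul_zero, pow_zero, PowerSeries.coeff_one, if_neg hn0, mul_zero]
      | succ k' =>
        set n' := n - 1 with hn'def
        have hn : n = n' + 1 := by omega
        have hcerase : (s.erase a).card = n' := by
          rw [Finset.card_erase_of_mem ha, hs]
        rw [partition_decomp ha f k']
        rw [show ((k' + 1)! : ℚ) = (k' + 1 : ℚ) * (k' ! : ℚ) by
          push_cast [Nat.factorial_succ]; ring]
        rw [mul_assoc, Finset.mul_sum]
        have hstep : ∀ B ∈ s.powerset.filter (fun B => a ∈ B),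
            (k' ! : ℚ) * (phi f B.card *
              ∑ Q ∈ Finset.univ.filter
                  (fun Q : Finpartition (s \ B) => Q.parts.card = k'),
                ∏ C ∈ Q.parts, phi f C.card)
            = phi f ((B.erase a).card + 1) *
                (((n' - (B.erase a).card)! : ℚ) *
                  PowerSeries.coeff (n' - (B.erase a).card) (f ^ k')) := by
          intro B hB
          obtain ⟨hBs, haB⟩ := Finset.mem_filter.mp hB
          rw [Finset.mem_powerset] at hBs
          have hBcard : 1 ≤ B.card := Finset.card_pos.mpr ⟨a, haB⟩
          have hBle : B.card ≤ n := hs ▸ Finset.card_le_card hBs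
          have hsd : (s \ B).card = n - B.card := by
            rw [Finset.card_sdiff_of_subset hBs, hs]
          have hlt : (s \ B).card < n := by omega
          have hIH := IH (s \ B).card hlt (s \ B) rfl k'
          have h1 : (B.erase a).card + 1 = B.card := by
            rw [Finset.card_erase_of_mem haB]; omega
          have h2 : n' - (B.erase a).card = (s \ B).card := by
            rw [Finset.card_erase_of_mem haB, hsd]; omega
          rw [h1, h2, ← mul_assoc, mul_comm ((k' !  : ℚ)) (phi f B.card), mul_assoc, hIH]
        rw [Finset.sum_congr rfl hstep]
        rw [Finset.sum_nbij' (i := fun B => B.erase a) (j := fun C => insert a C)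
          (t := (s.erase a).powerset)
          (g := fun C => phi f (C.card + 1) *
            (((n' - C.card)! : ℚ) * PowerSeries.coeff (n' - C.card) (f ^ k')))
          (fun B hB => Finset.mem_powerset.mpr (Finset.erase_subset_erase a
            (Finset.mem_powerset.mp (Finset.mem_filter.mp hB).1)))
          (fun C hC => by
            have hC' := Finset.mem_powerset.mp hC
            refine Finset.mem_filter.mpr ⟨Finset.mem_powerset.mpr ?_, Finset.mem_insert_self a C⟩
            exact Finset.insert_subset ha (hC'.trans (Finset.erase_subset a s)))
          (fun B hB => Finset.insert_erase (Finset.mem_filter.mp hB).2)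
          (fun C hC => Finset.erase_insert (fun h =>
            (Finset.mem_erase.mp (Finset.mem_powerset.mp hC h)).1 rfl))
          (fun B hB => rfl)]
        rw [Finset.sum_powerset, hcerase]
        have hgroup : ∀ j ∈ Finset.range (n' + 1),
            ∑ C ∈ Finset.powersetCard j (s.erase a),
              phi f (C.card + 1) *
                (((n' - C.card)! : ℚ) * PowerSeries.coeff (n' - C.card) (f ^ k'))
            = (n'.choose j : ℚ) * (phi f (j + 1) *
                (((n' - j)! : ℚ) * PowerSeries.coeff (n' - j) (f ^ k'))) := by
          intro j hj
          rw [Finset.sum_congr rfl (fun C hC => by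
            rw [(Finset.mem_powersetCard.mp hC).2])]
          rw [Finset.sum_const, Finset.card_powersetCard, hcerase, nsmul_eq_mul]
        rw [Finset.sum_congr rfl hgroup]
        -- derivative identity
        have hder : ((n' + 1 : ℕ) : ℚ) * PowerSeries.coeff (n' + 1) (f ^ (k' + 1))
            = ((k' + 1 : ℕ) : ℚ) * ∑ i ∈ Finset.range (n' + 1),
                PowerSeries.coeff i (f ^ k') *
                  (PowerSeries.coeff (n' - i + 1) f * ((n' - i + 1 : ℕ) : ℚ)) := by
          have h6 : (d⁄dX ℚ) (f ^ (k' + 1)) = (k' + 1 : ℕ) • (f ^ k' • (d⁄dX ℚ) f) := by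
            simpa using Derivation.leibniz_pow (D := d⁄dX ℚ) (a := f) (k' + 1)
          have h5 := PowerSeries.coeff_derivative (f ^ (k' + 1)) n'
          rw [h6, smul_eq_mul] at h5
          rw [map_nsmul, nsmul_eq_mul, PowerSeries.coeff_mul,
            Finset.Nat.sum_antidiagonal_eq_sum_range_succ_mk, Nat.succ_eq_add_one] at h5
          have h7 : ∀ i ∈ Finset.range (n' + 1),
              PowerSeries.coeff (i, n' - i).1 (f ^ k') *
                PowerSeries.coeff (i, n' - i).2 ((d⁄dX ℚ) f)
              = PowerSeries.coeff i (f ^ k') *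
                  (PowerSeries.coeff (n' - i + 1) f * ((n' - i + 1 : ℕ) : ℚ)) := by
            intro i hi
            dsimp only
            rw [PowerSeries.coeff_derivative]
            push_cast
            ring
          rw [Finset.sum_congr rfl h7] at h5
          push_cast at h5 ⊢
          linear_combination -h5
        have main : ∑ j ∈ Finset.range (n' + 1),
            (n'.choose j : ℚ) * (phi f (j + 1) *
              (((n' - j)! : ℚ) * PowerSeries.coeff (n' - j) (f ^ k')))
            = (n' ! : ℚ) * ∑ i ∈ Finset.range (n' + 1),
                PowerSeries.coeff i (f ^ k') *
                  (PowerSeries.coeff (n' - i + 1) f * ((n' - i + 1 : ℕ) : ℚ)) := by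
          conv_lhs => rw [← Finset.sum_range_reflect]
          rw [Finset.mul_sum]
          apply Finset.sum_congr rfl
          intro i hi
          have hi' : i ≤ n' := by
            have := Finset.mem_range.mp hi; omega
          have h1 : n' + 1 - 1 - i = n' - i := by omega
          have h2 : n' - (n' - i) = i := by omega
          have h3 : n'.choose (n' - i) = n'.choose i := Nat.choose_symm hi'
          rw [h1, h2, h3]
          simp only [phi]
          have hfs : ((n' - i + 1)! : ℚ) = ((n' - i + 1 : ℕ) : ℚ) * ((n' - i)! : ℚ) := by
            push_cast [Nat.factorial_succ]; ring
          have hc := Nat.choose_mul_factorial_mul_factorial hi'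
          have key : (n'.choose i : ℚ) * ((i ! : ℚ) * ((n' - i)! : ℚ)) = (n' ! : ℚ) := by
            push_cast [← hc]; ring
          rw [hfs]
          linear_combination (((n' - i + 1 : ℕ) : ℚ) * PowerSeries.coeff (n' - i + 1) f *
            PowerSeries.coeff i (f ^ k')) * key
        rw [main, hn]
        have hfac : ((n' + 1)! : ℚ) = ((n' + 1 : ℕ) : ℚ) * (n' ! : ℚ) := by
          push_cast [Nat.factorial_succ]; ring
        rw [hfac]
        push_cast at hder ⊢
        linear_combination (-(n' ! : ℚ)) * hder


end Aux

/-- If `f` and `g` are formal power series over `ℚ` with zero constant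
term which are compositional inverses of each other, and `F n k`, `G n k` denote the
partial Bell polynomial matrices built from the scaled coefficients `f_j = j! · coeff j f`
and `g_j = j! · coeff j g`, then the matrices `F` and `G` are inverse to each other. -/
theorem statement2 (f g : PowerSeries ℚ)
    (hf : PowerSeries.constantCoeff f = 0) (hg : PowerSeries.constantCoeff g = 0)
    (hgf : PowerSeries.comp g f = PowerSeries.X)
    (hfg : PowerSeries.comp f g = PowerSeries.X)
    (n k : ℕ) (hk : 1 ≤ k) (hkn : k ≤ n) :
    ∑ m ∈ Finset.Icc k n,
        (∑ P ∈ Finset.univ.filter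
            (fun P : Finpartition (Finset.univ : Finset (Fin n)) => P.parts.card = m),
          ∏ B ∈ P.parts, (B.card ! : ℚ) * PowerSeries.coeff B.card f) *
        (∑ Q ∈ Finset.univ.filter
            (fun Q : Finpartition (Finset.univ : Finset (Fin m)) => Q.parts.card = k),
          ∏ B ∈ Q.parts, (B.card ! : ℚ) * PowerSeries.coeff B.card g) =
      if n = k then 1 else 0 := by
  classical
  simp only [phi_eq]
  have hcomp_pow : ∀ j : ℕ, PowerSeries.comp (g ^ j) f = PowerSeries.X ^ j := by
    intro j
    induction j with
    | zero => simpa using comp_one f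
    | succ j ih => rw [pow_succ, comp_mul hf, ih, hgf, pow_succ]
  have hkfac : ((k ! : ℕ) : ℚ) ≠ 0 := Nat.cast_ne_zero.mpr (Nat.factorial_ne_zero k)
  apply mul_left_cancel₀ hkfac
  have hterm : ∀ m ∈ Finset.Icc k n,
      (k ! : ℚ) *
        ((∑ P ∈ Finset.univ.filter
            (fun P : Finpartition (Finset.univ : Finset (Fin n)) => P.parts.card = m),
          ∏ B ∈ P.parts, phi f B.card) *
        (∑ Q ∈ Finset.univ.filter
            (fun Q : Finpartition (Finset.univ : Finset (Fin m)) => Q.parts.card = k),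
          ∏ B ∈ Q.parts, phi g B.card))
      = (n ! : ℚ) * (PowerSeries.coeff m (g ^ k) * PowerSeries.coeff n (f ^ m)) := by
    intro m _
    have h1 := bell_sum f hf n (Finset.univ : Finset (Fin n)) (by simp) m
    have h2 := bell_sum g hg m (Finset.univ : Finset (Fin m)) (by simp) k
    linear_combination (∑ P ∈ Finset.univ.filter
        (fun P : Finpartition (Finset.univ : Finset (Fin n)) => P.parts.card = m),
        ∏ B ∈ P.parts, phi f B.card) * h2 +
      PowerSeries.coeff m (g ^ k) * h1
  rw [Finset.mul_sum, Finset.sum_congr rfl hterm, ← Finset.mul_sum]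
  have hsub : Finset.Icc k n ⊆ Finset.range (n + 1) := by
    intro m hm
    rw [Finset.mem_range]
    exact Nat.lt_succ_of_le (Finset.mem_Icc.mp hm).2
  have hext : ∑ m ∈ Finset.Icc k n,
        PowerSeries.coeff m (g ^ k) * PowerSeries.coeff n (f ^ m)
      = ∑ m ∈ Finset.range (n + 1),
        PowerSeries.coeff m (g ^ k) * PowerSeries.coeff n (f ^ m) := by
    apply Finset.sum_subset hsub
    intro m hm hnot
    have hmk : m < k := by
      rw [Finset.mem_range] at hm
      rw [Finset.mem_Icc] at hnot
      omega
    rw [coeff_pow_eq_zero hg hmk, zero_mul]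
  rw [hext]
  have : ∑ m ∈ Finset.range (n + 1),
        PowerSeries.coeff m (g ^ k) * PowerSeries.coeff n (f ^ m)
      = PowerSeries.coeff n (PowerSeries.comp (g ^ k) f) := (coeff_comp _ _ _).symm
  rw [this, hcomp_pow k, PowerSeries.coeff_X_pow]
  split_ifs with h
  · subst h; ring
  · ring
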